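/- Let B*, B₀ ∈ ℝ^{k×d} have orthonormal rows with ‖B₀ − B*‖₂ ≤ ε, let S ⊆ ℝ^d be a subspace with k ≤ dim(S⊥), and suppose c := cangle(rowspace(B₀), S⊥) > 0. Let B ∈ ℝ^{k×d} satisfy B x = B₀ x for every x ∈ S⊥. Then for all v, v* ∈ ℝ^k: ‖v − v*‖₂ ≤ (‖Bᵀ v − B*ᵀ v*‖₂ + ε ‖v*‖₂) / c. -/

import Mathlib

open Matrix RealInnerProductSpace

noncomputable section

/-- View a plain vector as an element of Euclidean space. -/
def toE {n : ℕ} (x : Fin n → ℝ) : EuclideanSpace ℝ (Fin n) := WithLp.toLp 2 x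

/-- View an element of Euclidean space as a plain vector. -/
def ofE {n : ℕ} (x : EuclideanSpace ℝ (Fin n)) : Fin n → ℝ := x

/-- Euclidean (ℓ2) norm of a vector. -/
def enorm2 {n : ℕ} (x : Fin n → ℝ) : ℝ := ‖toE x‖

/-- Spectral (ℓ2 operator) norm of a matrix. -/
def specNorm {m n : ℕ} (M : Matrix (Fin m) (Fin n) ℝ) : ℝ :=
  sSup {c | ∃ x : Fin n → ℝ, enorm2 x = 1 ∧ c = enorm2 (M.mulVec x)}

/-- Row space of a matrix, as a subspace of Euclidean space. -/
def rowspace {k d : ℕ} (B : Matrix (Fin k) (Fin d) ℝ) :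
    Submodule ℝ (EuclideanSpace ℝ (Fin d)) :=
  Submodule.span ℝ (Set.range fun i => toE (B i))

/-- Cosine of the largest principal angle between subspaces `R` and `T` of `ℝ^d`. -/
def cangle {d : ℕ} (R T : Submodule ℝ (EuclideanSpace ℝ (Fin d))) : ℝ :=
  sInf {c | ∃ r ∈ R, ‖r‖ = 1 ∧ c = ‖(T.orthogonalProjectionOnto r : EuclideanSpace ℝ (Fin d))‖}

lemma inner_toE {n : ℕ} (x y : Fin n → ℝ) : ⟪toE x, toE y⟫ = x ⬝ᵥ y := by
  simp [PiLp.inner_apply, RCLike.inner_apply, dotProduct, toE, mul_comm]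

lemma toE_smul {n : ℕ} (c : ℝ) (x : Fin n → ℝ) : toE (c • x) = c • toE x := by simp [toE]

lemma enorm2_smul {n : ℕ} (c : ℝ) (x : Fin n → ℝ) :
    enorm2 (c • x) = |c| * enorm2 x := by
  rw [enorm2, toE_smul, norm_smul]; rfl

lemma specNorm_nonneg {m n : ℕ} (M : Matrix (Fin m) (Fin n) ℝ) : 0 ≤ specNorm M :=
  Real.sSup_nonneg (by rintro c ⟨x, -, rfl⟩; exact norm_nonneg _)

lemma specNorm_bdd {m n : ℕ} (M : Matrix (Fin m) (Fin n) ℝ) :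
    BddAbove {c | ∃ x : Fin n → ℝ, enorm2 x = 1 ∧ c = enorm2 (M.mulVec x)} := by
  set L := LinearMap.toContinuousLinearMap (Matrix.toEuclideanLin M) with hL
  refine ⟨‖L‖, ?_⟩
  rintro c ⟨x, hx, rfl⟩
  calc enorm2 (M.mulVec x) = ‖L (toE x)‖ := by simp [enorm2, hL, toE, Matrix.toEuclideanLin_apply]
    _ ≤ ‖L‖ * ‖toE x‖ := L.le_opNorm _
    _ = ‖L‖ := by rw [show ‖toE x‖ = 1 from hx, mul_one]

lemma mulVec_le {m n : ℕ} (M : Matrix (Fin m) (Fin n) ℝ) (x : Fin n → ℝ) :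
    enorm2 (M.mulVec x) ≤ specNorm M * enorm2 x := by
  rcases eq_or_ne (enorm2 x) 0 with h | h
  · have hx : toE x = 0 := norm_eq_zero.mp h
    have hx0 : x = 0 := by simpa [toE] using hx
    subst hx0
    rw [Matrix.mulVec_zero, h, mul_zero, enorm2, show toE (0 : Fin m → ℝ) = 0 by simp [toE], norm_zero]
  · have hpos : 0 < enorm2 x := lt_of_le_of_ne (norm_nonneg (toE x)) (Ne.symm h)
    have hmem : enorm2 (M.mulVec ((enorm2 x)⁻¹ • x)) ∈
        {c | ∃ y : Fin n → ℝ, enorm2 y = 1 ∧ c = enorm2 (M.mulVec y)} := by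
      refine ⟨(enorm2 x)⁻¹ • x, ?_, rfl⟩
      rw [enorm2_smul, abs_of_pos (inv_pos.mpr hpos), inv_mul_cancel₀ h]
    have hle := le_csSup (specNorm_bdd M) hmem
    rw [Matrix.mulVec_smul, enorm2_smul, abs_of_pos (inv_pos.mpr hpos)] at hle
    have := mul_le_mul_of_nonneg_left hle (le_of_lt hpos)
    rw [← mul_assoc, mul_inv_cancel₀ h, one_mul] at this
    rw [specNorm]
    linarith [this]

lemma enorm2_nonneg {n : ℕ} (x : Fin n → ℝ) : 0 ≤ enorm2 x := norm_nonneg _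

lemma dot_transpose {k d : ℕ} (M : Matrix (Fin k) (Fin d) ℝ) (v : Fin k → ℝ) (y : Fin d → ℝ) :
    (Mᵀ.mulVec v) ⬝ᵥ y = v ⬝ᵥ M.mulVec y := by
  rw [Matrix.mulVec_transpose, Matrix.dotProduct_mulVec]

lemma enorm2_sq {n : ℕ} (x : Fin n → ℝ) : enorm2 x ^ 2 = x ⬝ᵥ x := by
  rw [enorm2, ← real_inner_self_eq_norm_sq, inner_toE]

lemma enorm2_transpose_orthonormal {k d : ℕ} (M : Matrix (Fin k) (Fin d) ℝ)
    (h : M * Mᵀ = 1) (u : Fin k → ℝ) : enorm2 (Mᵀ.mulVec u) = enorm2 u := by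
  have h2 : enorm2 (Mᵀ.mulVec u) ^ 2 = enorm2 u ^ 2 := by
    rw [enorm2_sq, enorm2_sq, dot_transpose, Matrix.mulVec_mulVec, h, Matrix.one_mulVec]
  rw [← Real.sqrt_sq (enorm2_nonneg (Mᵀ.mulVec u)), ← Real.sqrt_sq (enorm2_nonneg u), h2]

lemma transpose_mulVec_le {k d : ℕ} (M : Matrix (Fin k) (Fin d) ℝ) (v : Fin k → ℝ) :
    enorm2 (Mᵀ.mulVec v) ≤ specNorm M * enorm2 v := by
  have hsq : enorm2 (Mᵀ.mulVec v) ^ 2 ≤ (specNorm M * enorm2 v) * enorm2 (Mᵀ.mulVec v) := by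
    rw [enorm2_sq, dot_transpose]
    calc v ⬝ᵥ M.mulVec (Mᵀ.mulVec v) = ⟪toE v, toE (M.mulVec (Mᵀ.mulVec v))⟫ :=
          (inner_toE _ _).symm
      _ ≤ enorm2 v * enorm2 (M.mulVec (Mᵀ.mulVec v)) := real_inner_le_norm _ _
      _ ≤ enorm2 v * (specNorm M * enorm2 (Mᵀ.mulVec v)) :=
          mul_le_mul_of_nonneg_left (mulVec_le _ _) (enorm2_nonneg _)
      _ = (specNorm M * enorm2 v) * enorm2 (Mᵀ.mulVec v) := by ring
  rcases eq_or_lt_of_le (enorm2_nonneg (Mᵀ.mulVec v)) with h | h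
  · rw [← h]; exact mul_nonneg (specNorm_nonneg M) (enorm2_nonneg _)
  · nlinarith

lemma euclid_sum_apply {n : ℕ} {ι : Type*} (s : Finset ι)
    (f : ι → EuclideanSpace ℝ (Fin n)) (j : Fin n) :
    (∑ i ∈ s, f i) j = ∑ i ∈ s, f i j := by
  classical
  induction s using Finset.cons_induction with
  | empty => rfl
  | cons a s ha ih => rw [Finset.sum_cons, Finset.sum_cons, PiLp.add_apply, ih]

lemma mem_rowspace {k d : ℕ} (M : Matrix (Fin k) (Fin d) ℝ) (u : Fin k → ℝ) :
    toE (Mᵀ.mulVec u) ∈ rowspace M := by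
  have heq : toE (Mᵀ.mulVec u) = ∑ i, u i • toE (M i) := by
    ext j
    rw [euclid_sum_apply]
    simp [toE, Matrix.mulVec, dotProduct, Matrix.transpose_apply, mul_comm, PiLp.smul_apply]
  rw [heq]
  exact Submodule.sum_mem _ fun i _ =>
    Submodule.smul_mem _ _ (Submodule.subset_span ⟨i, rfl⟩)

lemma cangle_mul_le {d : ℕ} (R T : Submodule ℝ (EuclideanSpace ℝ (Fin d)))
    (r : EuclideanSpace ℝ (Fin d)) (hr : r ∈ R) (h0 : r ≠ 0) :
    cangle R T * ‖r‖ ≤ ‖(Submodule.orthogonalProjectionOnto T r : EuclideanSpace ℝ (Fin d))‖ := by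
  have hn : (0:ℝ) < ‖r‖ := norm_pos_iff.mpr h0
  have hbdd : BddBelow {c | ∃ r ∈ R, ‖r‖ = 1 ∧
      c = ‖(Submodule.orthogonalProjectionOnto T r : EuclideanSpace ℝ (Fin d))‖} := by
    refine ⟨0, ?_⟩
    rintro c ⟨r, -, -, rfl⟩
    exact norm_nonneg _
  have hmem : ‖(Submodule.orthogonalProjectionOnto T ((‖r‖)⁻¹ • r) : EuclideanSpace ℝ (Fin d))‖ ∈
      {c | ∃ r ∈ R, ‖r‖ = 1 ∧
        c = ‖(Submodule.orthogonalProjectionOnto T r : EuclideanSpace ℝ (Fin d))‖} := by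
    refine ⟨(‖r‖)⁻¹ • r, Submodule.smul_mem _ _ hr, ?_, rfl⟩
    rw [norm_smul, norm_inv, norm_norm, inv_mul_cancel₀ (ne_of_gt hn)]
  have hle := csInf_le hbdd hmem
  rw [_root_.map_smul] at hle
  have hcoe : ((((‖r‖)⁻¹ • Submodule.orthogonalProjectionOnto T r) : T) : EuclideanSpace ℝ (Fin d))
      = (‖r‖)⁻¹ • ((Submodule.orthogonalProjectionOnto T r : EuclideanSpace ℝ (Fin d))) := rfl
  rw [hcoe, norm_smul, norm_inv, norm_norm] at hle
  rw [cangle]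
  calc sInf _ * ‖r‖ ≤ (‖r‖⁻¹ * ‖(Submodule.orthogonalProjectionOnto T r : EuclideanSpace ℝ (Fin d))‖) * ‖r‖ :=
        mul_le_mul_of_nonneg_right hle (norm_nonneg _)
    _ = ‖(Submodule.orthogonalProjectionOnto T r : EuclideanSpace ℝ (Fin d))‖ := by
        field_simp

lemma proj_norm_le' {d : ℕ} (K : Submodule ℝ (EuclideanSpace ℝ (Fin d)))
    (x : EuclideanSpace ℝ (Fin d)) :
    ‖(Submodule.orthogonalProjectionOnto K x : EuclideanSpace ℝ (Fin d))‖ ≤ ‖x‖ := by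
  have h := (Submodule.orthogonalProjectionOnto K).le_opNorm x
  have h1 := Submodule.orthogonalProjectionOnto_norm_le K
  calc ‖(Submodule.orthogonalProjectionOnto K x : EuclideanSpace ℝ (Fin d))‖
      = ‖Submodule.orthogonalProjectionOnto K x‖ := rfl
    _ ≤ ‖Submodule.orthogonalProjectionOnto K‖ * ‖x‖ := h
    _ ≤ 1 * ‖x‖ := mul_le_mul_of_nonneg_right h1 (norm_nonneg _)
    _ = ‖x‖ := one_mul _

/-- if `B` agrees with `B₀` on `S⊥`, where `B₀` is `ε`-close to the orthonormal
`B*` and `c = cangle(rowspace B₀, S⊥) > 0`, then any heads `v, v*` satisfy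
`‖v − v*‖₂ ≤ (‖Bᵀ v − B*ᵀ v*‖₂ + ε ‖v*‖₂) / c`. -/
theorem stmt_6 {k d : ℕ} (Bstar B0 : Matrix (Fin k) (Fin d) ℝ)
    (hBs : Bstar * Bstarᵀ = 1) (hB0 : B0 * B0ᵀ = 1)
    (ε : ℝ) (hε : specNorm (B0 - Bstar) ≤ ε)
    (S : Submodule ℝ (EuclideanSpace ℝ (Fin d)))
    (hdim : k ≤ Module.finrank ℝ Sᗮ)
    (hc : 0 < cangle (rowspace B0) Sᗮ)
    (B : Matrix (Fin k) (Fin d) ℝ)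
    (hagree : ∀ x ∈ Sᗮ, B.mulVec (ofE x) = B0.mulVec (ofE x)) :
    ∀ v vstar : Fin k → ℝ,
      enorm2 (v - vstar) ≤
        (enorm2 (Bᵀ.mulVec v - Bstarᵀ.mulVec vstar) + ε * enorm2 vstar) /
          cangle (rowspace B0) Sᗮ := by
  intro v vstar
  have hε0 : 0 ≤ ε := le_trans (specNorm_nonneg _) hε
  set w : Fin d → ℝ := Bᵀ.mulVec v - Bstarᵀ.mulVec vstar with hw
  set a : Fin d → ℝ := B0ᵀ.mulVec (v - vstar) with ha
  set b : Fin d → ℝ := (B - B0)ᵀ.mulVec v with hb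
  set e : Fin d → ℝ := (B0 - Bstar)ᵀ.mulVec vstar with he
  have hsum : a + b + e = w := by
    rw [ha, hb, he, hw, Matrix.transpose_sub, Matrix.transpose_sub,
      Matrix.sub_mulVec, Matrix.sub_mulVec, Matrix.mulVec_sub]
    abel
  have hdecomp : toE w = toE a + toE b + toE e := by
    rw [← hsum]; simp [toE]
  have hbmem : toE b ∈ (Sᗮ)ᗮ := by
    rw [Submodule.mem_orthogonal]
    intro x hx
    rw [real_inner_comm]
    have hxe : toE (ofE x) = x := rfl
    rw [← hxe, inner_toE, hb, dot_transpose, Matrix.sub_mulVec, hagree x hx, sub_self,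
      dotProduct_zero]
  have hPb : Submodule.orthogonalProjectionOnto Sᗮ (toE b) = 0 :=
    Submodule.orthogonalProjectionOnto_apply_of_mem_orthogonal hbmem
  have hPsum : (Submodule.orthogonalProjectionOnto Sᗮ (toE a) : EuclideanSpace ℝ (Fin d))
      = (Submodule.orthogonalProjectionOnto Sᗮ (toE w) : EuclideanSpace ℝ (Fin d))
        - (Submodule.orthogonalProjectionOnto Sᗮ (toE e) : EuclideanSpace ℝ (Fin d)) := by
    rw [hdecomp, map_add, map_add, hPb]
    push_cast
    abel
  have hnorm_a : enorm2 (v - vstar) = ‖toE a‖ :=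
    (enorm2_transpose_orthonormal B0 hB0 _).symm
  by_cases hz : v - vstar = 0
  · rw [hz]
    have h0 : enorm2 (0 : Fin k → ℝ) = 0 := by
      rw [enorm2, show toE (0 : Fin k → ℝ) = 0 by simp [toE], norm_zero]
    rw [h0]
    apply div_nonneg _ (le_of_lt hc)
    exact add_nonneg (enorm2_nonneg _) (mul_nonneg hε0 (enorm2_nonneg _))
  · have ha0 : toE a ≠ 0 := by
      intro h
      apply hz
      have h1 : enorm2 (v - vstar) = 0 := by rw [hnorm_a, h, norm_zero]
      have h2 : toE (v - vstar) = 0 := norm_eq_zero.mp h1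
      exact congrArg WithLp.ofLp h2
    have key := cangle_mul_le (rowspace B0) Sᗮ (toE a) (mem_rowspace B0 _) ha0
    have hPw : ‖(Submodule.orthogonalProjectionOnto Sᗮ (toE w) : EuclideanSpace ℝ (Fin d))‖ ≤ enorm2 w :=
      proj_norm_le' _ _
    have hPe : ‖(Submodule.orthogonalProjectionOnto Sᗮ (toE e) : EuclideanSpace ℝ (Fin d))‖ ≤ ε * enorm2 vstar := by
      calc ‖(Submodule.orthogonalProjectionOnto Sᗮ (toE e) : EuclideanSpace ℝ (Fin d))‖ ≤ ‖toE e‖ :=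
            proj_norm_le' _ _
        _ = enorm2 ((B0 - Bstar)ᵀ.mulVec vstar) := by rw [he, enorm2]
        _ ≤ specNorm (B0 - Bstar) * enorm2 vstar := transpose_mulVec_le _ _
        _ ≤ ε * enorm2 vstar := mul_le_mul_of_nonneg_right hε (enorm2_nonneg _)
    rw [le_div_iff₀ hc]
    calc enorm2 (v - vstar) * cangle (rowspace B0) Sᗮ
        = cangle (rowspace B0) Sᗮ * ‖toE a‖ := by rw [hnorm_a]; ring
      _ ≤ ‖(Submodule.orthogonalProjectionOnto Sᗮ (toE a) : EuclideanSpace ℝ (Fin d))‖ := key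
      _ = ‖(Submodule.orthogonalProjectionOnto Sᗮ (toE w) : EuclideanSpace ℝ (Fin d))
            - (Submodule.orthogonalProjectionOnto Sᗮ (toE e) : EuclideanSpace ℝ (Fin d))‖ := by rw [hPsum]
      _ ≤ ‖(Submodule.orthogonalProjectionOnto Sᗮ (toE w) : EuclideanSpace ℝ (Fin d))‖
            + ‖(Submodule.orthogonalProjectionOnto Sᗮ (toE e) : EuclideanSpace ℝ (Fin d))‖ := norm_sub_le _ _
      _ ≤ enorm2 w + ε * enorm2 vstar := add_le_add hPw hPe
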